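/- arXiv:2201.11263 — 2 statements merged into one kernel-verified Lean document; each statement's English description precedes it below -/
import Mathlib

section
/- In the polynomial ring S = k[x_1,...,x_n] with maximal ideal 𝔪 = (x_1,...,x_n), for every integer p ≥ 1 one has the ideal equality (x_1^2,...,x_n^2)·𝔪^{p−1} = (x_1^2,...,x_n^2) ∩ 𝔪^{p+1}. -/
open MvPolynomial

section Aux

variable {k : Type*} [Field k] {n : ℕ}

local notation "𝔪" => Ideal.span (Set.range fun i : Fin n => (X i : MvPolynomial (Fin n) k))

/-- A monomial of degree at least `q` lies in `𝔪^q`. -/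
lemma monomial_mem_pow (q : ℕ) (m : Fin n →₀ ℕ) (c : k)
    (h : q ≤ m.sum fun _ e => e) : (monomial m c : MvPolynomial (Fin n) k) ∈ 𝔪 ^ q := by
  induction q generalizing m with
  | zero => simp
  | succ q ih =>
    have hm : ∃ i, m i ≠ 0 := by
      by_contra hc
      push_neg at hc
      have : m = 0 := Finsupp.ext fun i => hc i
      simp [this, Finsupp.sum_zero_index] at h
    obtain ⟨i, hi⟩ := hm
    have hle : Finsupp.single i 1 ≤ m := by
      intro j
      by_cases hji : j = i
      · subst hji; simpa [Finsupp.single_apply] using Nat.one_le_iff_ne_zero.2 hi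
      · simp [Finsupp.single_apply, Ne.symm hji]
    set m' := m - Finsupp.single i 1 with hm'
    have hsum : m = Finsupp.single i 1 + m' := by
      rw [hm', add_tsub_cancel_of_le hle]
    have hdeg : m.sum (fun _ e => e) = 1 + m'.sum fun _ e => e := by
      rw [hsum, Finsupp.sum_add_index' (fun _ => rfl) (fun _ _ _ => rfl),
        Finsupp.sum_single_index rfl]
    have hq : q ≤ m'.sum fun _ e => e := by omega
    have heq : (monomial m c : MvPolynomial (Fin n) k) = X i * monomial m' c := by
      rw [X, monomial_mul, one_mul, ← hsum]
    rw [heq, pow_succ']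
    exact Ideal.mul_mem_mul (Ideal.subset_span ⟨i, rfl⟩) (ih m' hq)

/-- Every monomial in the support of an element of `𝔪^q` has degree at least `q`. -/
lemma deg_of_mem_pow (q : ℕ) (f : MvPolynomial (Fin n) k) (hf : f ∈ 𝔪 ^ q) :
    ∀ m ∈ f.support, q ≤ m.sum fun _ e => e := by
  induction q generalizing f with
  | zero => intro m _; exact Nat.zero_le _
  | succ q ih =>
    rw [pow_succ] at hf
    refine Submodule.mul_induction_on hf ?_ ?_
    · intro a ha b hb m hm
      have hmem := MvPolynomial.support_mul a b hm
      rw [Finset.mem_add] at hmem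
      obtain ⟨ma, hma, mb, hmb, rfl⟩ := hmem
      have h1 : q ≤ ma.sum fun _ e => e := ih a ha ma hma
      have hbX : b ∈ Ideal.span (MvPolynomial.X '' (Set.univ : Set (Fin n)) :
          Set (MvPolynomial (Fin n) k)) := by
        rwa [Set.image_univ]
      obtain ⟨i, _, hib⟩ := mem_ideal_span_X_image.1 hbX mb hmb
      have h2 : 1 ≤ mb.sum fun _ e => e := by
        have : mb i ≤ mb.sum fun _ e => e :=
          Finset.single_le_sum (fun _ _ => Nat.zero_le _) (Finsupp.mem_support_iff.2 hib)
        omega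
      rw [Finsupp.sum_add_index' (fun _ => rfl) (fun _ _ _ => rfl)]
      omega
    · intro x y hx hy m hm
      rcases Finset.mem_union.1 (Finsupp.support_add hm) with h | h
      · exact hx m h
      · exact hy m h

end Aux

/-- In `S = k[x_1,...,x_n]` with `𝔪 = (x_1,...,x_n)`, for every `p ≥ 1` one has
`(x_1^2,...,x_n^2) · 𝔪^{p-1} = (x_1^2,...,x_n^2) ∩ 𝔪^{p+1}`. -/
theorem stmt2 (k : Type*) [Field k] (n p : ℕ) (hp : 1 ≤ p) :
    (Ideal.span (Set.range fun i : Fin n => (X i : MvPolynomial (Fin n) k) ^ 2)) *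
      (Ideal.span (Set.range fun i : Fin n => (X i : MvPolynomial (Fin n) k))) ^ (p - 1) =
    (Ideal.span (Set.range fun i : Fin n => (X i : MvPolynomial (Fin n) k) ^ 2)) ⊓
      (Ideal.span (Set.range fun i : Fin n => (X i : MvPolynomial (Fin n) k))) ^ (p + 1) := by
  set I : Ideal (MvPolynomial (Fin n) k) :=
    Ideal.span (Set.range fun i : Fin n => (X i : MvPolynomial (Fin n) k) ^ 2) with hI
  set M : Ideal (MvPolynomial (Fin n) k) :=
    Ideal.span (Set.range fun i : Fin n => (X i : MvPolynomial (Fin n) k)) with hM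
  have hIM : I ≤ M ^ 2 := by
    rw [hI, Ideal.span_le]
    rintro _ ⟨i, rfl⟩
    have : (X i : MvPolynomial (Fin n) k) * X i ∈ M * M :=
      Ideal.mul_mem_mul (Ideal.subset_span ⟨i, rfl⟩) (Ideal.subset_span ⟨i, rfl⟩)
    simpa [sq] using this
  have hIset : (Set.range fun i : Fin n => (X i : MvPolynomial (Fin n) k) ^ 2) =
      (fun s => monomial s (1 : k)) '' Set.range (fun i : Fin n => Finsupp.single i 2) := by
    rw [← Set.range_comp]
    refine congrArg Set.range (funext fun i => ?_)
    simp [Function.comp, X_pow_eq_monomial]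
  refine le_antisymm (le_inf ?_ ?_) ?_
  · exact Ideal.mul_le_left
  · calc I * M ^ (p - 1) ≤ M ^ 2 * M ^ (p - 1) := Ideal.mul_mono_left hIM
      _ = M ^ (p + 1) := by rw [← pow_add]; congr 1; omega
  · intro f hf
    obtain ⟨hfI, hfM⟩ := hf
    have hdeg := deg_of_mem_pow (p + 1) f hfM
    rw [hI, hIset] at hfI
    have hdom := mem_ideal_span_monomial_image.1 hfI
    rw [f.as_sum]
    refine Submodule.sum_mem _ fun m hm => ?_
    obtain ⟨_, ⟨i, rfl⟩, hle⟩ := hdom m hm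
    have h2 : (2 : ℕ) ≤ m i := by simpa using hle i
    have hle' : Finsupp.single i 2 ≤ m := hle
    set m' := m - Finsupp.single i 2 with hm'
    have hsum : m = Finsupp.single i 2 + m' := by rw [hm', add_tsub_cancel_of_le hle']
    have hdeg2 : m.sum (fun _ e => e) = 2 + m'.sum fun _ e => e := by
      rw [hsum, Finsupp.sum_add_index' (fun _ => rfl) (fun _ _ _ => rfl),
        Finsupp.sum_single_index rfl]
    have hp1 : p + 1 ≤ m.sum fun _ e => e := hdeg m hm
    have heq : (monomial m (coeff m f) : MvPolynomial (Fin n) k) =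
        X i ^ 2 * monomial m' (coeff m f) := by
      rw [X_pow_eq_monomial, monomial_mul, one_mul, ← hsum]
    rw [heq]
    exact Ideal.mul_mem_mul (Ideal.subset_span ⟨i, rfl⟩)
      (monomial_mem_pow (p - 1) m' _ (by omega))
end

section
/- Let G be the set of monomials of degree 3 in k[x_1,...,x_n] consisting of all non-square-free cubic monomials together with a set of square-free cubics, and suppose that for every choice of four distinct variables, the number of square-free cubics in G supported on those four variables is either 0 or at least 2. Then G satisfies the path condition: for any f, g ∈ G there is a sequence f = h_0, ..., h_t = g of elements of G, each dividing lcm(f,g), with deg lcm(h_k, h_{k+1}) = 4 for all k. -/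
/-- Total degree of an exponent vector. -/
def mdeg {σ : Type*} [Fintype σ] (v : σ → ℕ) : ℕ := ∑ i, v i

/-- There is a path in `G` from `f` to `g` all of whose members divide
`lcm(f,g)` and in which consecutive members have lcm of degree `dd + 1`. -/
def pathBetween {σ : Type*} [Fintype σ] (G : Set (σ → ℕ)) (dd : ℕ)
    (f g : σ → ℕ) : Prop :=
  ∃ (t : ℕ) (h : ℕ → σ → ℕ), h 0 = f ∧ h t = g ∧
    (∀ k ≤ t, h k ∈ G ∧ h k ≤ f ⊔ g) ∧
    (∀ k < t, mdeg (h k ⊔ h (k + 1)) = dd + 1)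

/-- The path condition characterizing linear presentation. -/
def PathCond {σ : Type*} [Fintype σ] (G : Set (σ → ℕ)) (dd : ℕ) : Prop :=
  ∀ f ∈ G, ∀ g ∈ G, pathBetween G dd f g

namespace Stmt12Aux
variable {n : ℕ}

lemma mdeg_add (v w : Fin n → ℕ) : mdeg (v + w) = mdeg v + mdeg w := by
  simp [mdeg, Finset.sum_add_distrib]

lemma mdeg_single (i : Fin n) (c : ℕ) : mdeg (Pi.single i c) = c := by simp [mdeg]

lemma mdeg_update (v : Fin n → ℕ) (i : Fin n) (a : ℕ) :
    mdeg (Function.update v i a) + v i = mdeg v + a := by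
  simp [mdeg, Finset.sum_update_of_mem (Finset.mem_univ i), ← Finset.erase_eq]
  rw [← Finset.add_sum_erase _ v (Finset.mem_univ i)]
  ring

lemma mdeg_mono {v w : Fin n → ℕ} (h : v ≤ w) : mdeg v ≤ mdeg w :=
  Finset.sum_le_sum fun i _ => h i

lemma eq_of_le_of_mdeg_le {v w : Fin n → ℕ} (h : v ≤ w) (h2 : mdeg w ≤ mdeg v) : v = w := by
  funext i
  by_contra hne
  have h3 : v i < w i := lt_of_le_of_ne (h i) hne
  have := Finset.sum_lt_sum (s := Finset.univ) (fun i _ => h i) ⟨i, Finset.mem_univ i, h3⟩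
  exact absurd h2 (by simpa [mdeg] using Nat.not_le.mpr this)

lemma path_refl {G : Set (Fin n → ℕ)} {f : Fin n → ℕ} (hf : f ∈ G) : pathBetween G 3 f f :=
  ⟨0, fun _ => f, rfl, rfl, fun _ _ => ⟨hf, le_sup_left⟩, fun k hk => absurd hk (Nat.not_lt_zero k)⟩

lemma path_symm {G : Set (Fin n → ℕ)} {dd : ℕ} {f g : Fin n → ℕ}
    (p : pathBetween G dd f g) : pathBetween G dd g f := by
  obtain ⟨t, h, h0, ht, hmem, hedge⟩ := p
  refine ⟨t, fun k => h (t - k), by simp [ht], by simp [h0], ?_, ?_⟩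
  · intro k _
    obtain ⟨m1, m2⟩ := hmem (t - k) (Nat.sub_le t k)
    exact ⟨m1, by rwa [sup_comm g f]⟩
  · intro k hk
    have h1 : t - k = (t - (k+1)) + 1 := by omega
    show mdeg (h (t - k) ⊔ h (t - (k+1))) = dd + 1
    rw [h1, sup_comm]
    exact hedge _ (by omega)

lemma path_step {G : Set (Fin n → ℕ)} {f g : Fin n → ℕ} (hf : f ∈ G) (hg : g ∈ G)
    (h4 : mdeg (f ⊔ g) = 4) : pathBetween G 3 f g := by
  refine ⟨1, fun k => if k = 0 then f else g, by simp, by simp, ?_, ?_⟩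
  · intro k _
    by_cases h : k = 0 <;> simp [h, hf, hg, le_sup_left, le_sup_right]
  · intro k hk
    have hk0 : k = 0 := by omega
    subst hk0
    simpa using h4

lemma path_trans {G : Set (Fin n → ℕ)} {dd : ℕ} {f v g : Fin n → ℕ} (hv : v ≤ f ⊔ g)
    (p1 : pathBetween G dd f v) (p2 : pathBetween G dd v g) : pathBetween G dd f g := by
  obtain ⟨t1, h1, h10, h1t, mem1, edge1⟩ := p1
  obtain ⟨t2, h2, h20, h2t, mem2, edge2⟩ := p2
  have hfv : f ⊔ v ≤ f ⊔ g := sup_le le_sup_left hv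
  have hvg : v ⊔ g ≤ f ⊔ g := sup_le hv le_sup_right
  refine ⟨t1 + t2, fun k => if k ≤ t1 then h1 k else h2 (k - t1), by simp [h10], ?_, ?_, ?_⟩
  · rcases Nat.eq_zero_or_pos t2 with h | h
    · subst h
      simp only [Nat.add_zero, le_refl, if_pos]
      rw [h1t, ← h20, h2t]
    · have hng : ¬ (t1 + t2 ≤ t1) := by omega
      simp only [if_neg hng]
      rw [show t1 + t2 - t1 = t2 by omega]
      exact h2t
  · intro k hk
    by_cases hk1 : k ≤ t1
    · obtain ⟨m1, m2⟩ := mem1 k hk1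
      exact ⟨by simp [hk1, m1], by simpa [hk1] using le_trans m2 hfv⟩
    · obtain ⟨m1, m2⟩ := mem2 (k - t1) (by omega)
      exact ⟨by simp [hk1, m1], by simpa [hk1] using le_trans m2 hvg⟩
  · intro k hk
    by_cases hk1 : k + 1 ≤ t1
    · have hk0 : k ≤ t1 := by omega
      simp only [if_pos hk0, if_pos hk1]
      exact edge1 k (by omega)
    · have he : (if k ≤ t1 then h1 k else h2 (k - t1)) = h2 (k - t1) := by
        by_cases hk0 : k ≤ t1
        · have hkt : k = t1 := by omega
          subst hkt
          simp only [if_pos le_rfl, Nat.sub_self, h1t, h20]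
        · simp [hk0]
      have he2 : (if k + 1 ≤ t1 then h1 (k+1) else h2 (k + 1 - t1)) = h2 ((k - t1) + 1) := by
        rw [if_neg hk1, show k + 1 - t1 = (k - t1) + 1 by omega]
      simp only [he, he2]
      exact edge2 (k - t1) (by omega)


def mv (f : Fin n → ℕ) (i j : Fin n) : Fin n → ℕ :=
  Function.update (Function.update f i (f i - 1)) j (f j + 1)

lemma mv_apply (f : Fin n → ℕ) (i j k : Fin n) :
    mv f i j k = if k = j then f j + 1 else if k = i then f i - 1 else f k := by
  simp [mv, Function.update_apply]

lemma mdeg_mv {f : Fin n → ℕ} {i j : Fin n} (hij : i ≠ j) (h1 : 1 ≤ f i) :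
    mdeg (mv f i j) = mdeg f := by
  have e1 := mdeg_update f i (f i - 1)
  have e2 := mdeg_update (Function.update f i (f i - 1)) j (f j + 1)
  have e3 : Function.update f i (f i - 1) j = f j := by
    rw [Function.update_apply, if_neg (Ne.symm hij)]
  rw [e3] at e2
  unfold mv
  omega

lemma mdeg_sup_mv_left {f : Fin n → ℕ} {i j : Fin n} (hij : i ≠ j) (h1 : 1 ≤ f i) :
    mdeg (f ⊔ mv f i j) = mdeg f + 1 := by
  have hsup : f ⊔ mv f i j = Function.update f j (f j + 1) := by
    funext k
    by_cases e1 : k = i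
    · subst e1
      simp only [Pi.sup_apply, mv_apply, Function.update_apply,
        if_neg hij, if_pos rfl, eq_self_iff_true, if_true]
      omega
    by_cases e2 : k = j
    · subst e2
      simp only [Pi.sup_apply, mv_apply, Function.update_apply, if_pos rfl, eq_self_iff_true, if_true]
      omega
    · simp only [Pi.sup_apply, mv_apply, Function.update_apply,
        if_neg e1, if_neg e2]
      omega
  rw [hsup]
  have := mdeg_update f j (f j + 1)
  omega

lemma mdeg_sup_mv_right {f g : Fin n → ℕ} {i j : Fin n} (hi : g i < f i) (hj : f j < g j) :
    mdeg (mv f i j ⊔ g) + 1 = mdeg (f ⊔ g) := by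
  have hij : i ≠ j := by intro e; subst e; omega
  have hsup : mv f i j ⊔ g = Function.update (f ⊔ g) i (f i - 1) := by
    funext k
    by_cases e1 : k = i
    · subst e1
      simp only [Pi.sup_apply, mv_apply, Function.update_apply,
        if_neg hij, if_pos rfl, eq_self_iff_true, if_true]
      omega
    by_cases e2 : k = j
    · subst e2
      simp only [Pi.sup_apply, mv_apply, Function.update_apply, if_pos rfl, eq_self_iff_true, if_true,
        if_neg (Ne.symm hij)]
      omega
    · simp only [Pi.sup_apply, mv_apply, Function.update_apply,
        if_neg e1, if_neg e2]
  rw [hsup]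
  have h2 := mdeg_update (f ⊔ g) i (f i - 1)
  have h3 : (f ⊔ g) i = f i := by
    simp only [Pi.sup_apply]
    omega
  rw [h3] at h2
  omega

lemma mv_le_sup {f g : Fin n → ℕ} {i j : Fin n} (hi : g i < f i) (hj : f j < g j) :
    mv f i j ≤ f ⊔ g := by
  have hij : i ≠ j := by intro e; subst e; omega
  intro k
  by_cases e1 : k = i
  · subst e1
    simp only [Pi.sup_apply, mv_apply, if_neg hij, if_pos rfl, eq_self_iff_true, if_true]
    omega
  by_cases e2 : k = j
  · subst e2
    simp only [Pi.sup_apply, mv_apply, if_pos rfl, eq_self_iff_true, if_true]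
    omega
  · simp only [Pi.sup_apply, mv_apply, if_neg e1, if_neg e2]
    omega

lemma bad_facts {G : Set (Fin n → ℕ)}
    (hnsf : ∀ v : Fin n → ℕ, mdeg v = 3 → (∃ i, 2 ≤ v i) → v ∈ G)
    {f g : Fin n → ℕ} {i j : Fin n}
    (hf3 : mdeg f = 3) (hi : g i < f i) (hj : f j < g j) (hnot : mv f i j ∉ G) :
    f i ≤ 2 ∧ f j = 0 ∧ ∀ k, k ≠ i → k ≠ j → f k ≤ 1 := by
  have hij : i ≠ j := by intro e; rw [e] at hi; omega
  have h3 : mdeg (mv f i j) = 3 := by rw [mdeg_mv hij (by omega), hf3]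
  have hsf : ∀ k, mv f i j k ≤ 1 := by
    by_contra hc
    push_neg at hc
    obtain ⟨k, hk⟩ := hc
    exact hnot (hnsf _ h3 ⟨k, hk⟩)
  have hii := hsf i
  have hjj := hsf j
  simp only [mv_apply, if_neg hij, eq_self_iff_true, if_true] at hii
  simp only [mv_apply, eq_self_iff_true, if_true] at hjj
  refine ⟨by omega, by omega, fun k hki hkj => ?_⟩
  have hk := hsf k
  simp only [mv_apply, if_neg hkj, if_neg hki] at hk
  exact hk

lemma eq_vec21 {w : Fin n → ℕ} {a b : Fin n} (hab : a ≠ b)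
    (ha : w a = 2) (hb : w b = 1) (h0 : ∀ k, k ≠ a → k ≠ b → w k = 0) :
    w = Pi.single a 2 + Pi.single b 1 := by
  funext k
  by_cases e1 : k = a
  · subst e1
    simp only [Pi.add_apply, Pi.single_apply]
    split_ifs <;> omega
  by_cases e2 : k = b
  · subst e2
    simp only [Pi.add_apply, Pi.single_apply]
    split_ifs <;> omega
  · have := h0 k e1 e2
    simp only [Pi.add_apply, Pi.single_apply]
    split_ifs <;> omega

lemma eq_vec3 {w : Fin n → ℕ} {a b c : Fin n} (hab : a ≠ b) (hac : a ≠ c) (hbc : b ≠ c)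
    (ha : w a = 1) (hb : w b = 1) (hc : w c = 1)
    (h0 : ∀ k, k ≠ a → k ≠ b → k ≠ c → w k = 0) :
    w = Pi.single a 1 + Pi.single b 1 + Pi.single c 1 := by
  funext k
  by_cases e1 : k = a
  · subst e1
    simp only [Pi.add_apply, Pi.single_apply]
    split_ifs <;> omega
  by_cases e2 : k = b
  · subst e2
    simp only [Pi.add_apply, Pi.single_apply]
    split_ifs <;> omega
  by_cases e3 : k = c
  · subst e3
    simp only [Pi.add_apply, Pi.single_apply]
    split_ifs <;> omega
  · have := h0 k e1 e2 e3
    simp only [Pi.add_apply, Pi.single_apply]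
    split_ifs <;> omega

lemma extract_two {f : Fin n → ℕ} {a : Fin n} (h3 : mdeg f = 3) (ha : f a = 2)
    (hle : ∀ k, k ≠ a → f k ≤ 1) :
    ∃ b, b ≠ a ∧ f = Pi.single a 2 + Pi.single b 1 := by
  have htot := Finset.add_sum_erase Finset.univ f (Finset.mem_univ a)
  have hsum : ∑ k ∈ Finset.univ.erase a, f k = 1 := by
    have : mdeg f = ∑ k ∈ Finset.univ, f k := rfl
    omega
  have hex : ∃ b ∈ Finset.univ.erase a, f b ≠ 0 := by
    by_contra hc
    push_neg at hc
    rw [Finset.sum_eq_zero hc] at hsum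
    omega
  obtain ⟨b, hbmem, hb0⟩ := hex
  have hba : b ≠ a := (Finset.mem_erase.mp hbmem).1
  have hb1 : f b = 1 := by have := hle b hba; omega
  refine ⟨b, hba, eq_vec21 (Ne.symm hba) ha hb1 ?_⟩
  intro k hka hkb
  by_contra hc
  have hsub : ({b, k} : Finset (Fin n)) ⊆ Finset.univ.erase a := by
    intro x hx
    simp only [Finset.mem_insert, Finset.mem_singleton] at hx
    rcases hx with rfl | rfl <;> simp [hba, hka]
  have hpair : ∑ x ∈ ({b, k} : Finset (Fin n)), f x = f b + f k := by
    rw [Finset.sum_pair (by intro e; exact hkb e.symm)]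
  have h2le := Finset.sum_le_sum_of_subset hsub (f := f)
  omega

lemma extract_sf {f : Fin n → ℕ} (h3 : mdeg f = 3) (hle : ∀ k, f k ≤ 1) :
    ∃ a b c, a ≠ b ∧ a ≠ c ∧ b ≠ c ∧
      f = Pi.single a 1 + Pi.single b 1 + Pi.single c 1 := by
  classical
  set S := Finset.univ.filter (fun k => f k = 1) with hS
  have hSsum : ∑ k ∈ S, f k = ∑ k ∈ Finset.univ, f k := by
    apply Finset.sum_subset (Finset.subset_univ S)
    intro x _ hx
    simp only [hS, Finset.mem_filter, Finset.mem_univ, true_and] at hx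
    have := hle x
    omega
  have hcardsum : ∑ k ∈ S, f k = S.card := by
    rw [Finset.sum_congr rfl (fun x hx => ?_), Finset.sum_const, smul_eq_mul, mul_one]
    simp only [hS, Finset.mem_filter] at hx
    exact hx.2
  have hcard : S.card = 3 := by
    have : mdeg f = ∑ k ∈ Finset.univ, f k := rfl
    omega
  obtain ⟨a, b, c, hab, hac, hbc, hSeq⟩ := Finset.card_eq_three.mp hcard
  have hmem : ∀ x, f x = 1 ↔ (x = a ∨ x = b ∨ x = c) := by
    intro x
    rw [show (x = a ∨ x = b ∨ x = c) ↔ x ∈ S by rw [hSeq]; simp]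
    simp [hS]
  refine ⟨a, b, c, hab, hac, hbc, eq_vec3 hab hac hbc ?_ ?_ ?_ ?_⟩
  · exact (hmem a).mpr (Or.inl rfl)
  · exact (hmem b).mpr (Or.inr (Or.inl rfl))
  · exact (hmem c).mpr (Or.inr (Or.inr rfl))
  · intro k h1 h2 h3'
    have := hle k
    have hne1 : f k ≠ 1 := fun hc => by rcases (hmem k).mp hc with rfl|rfl|rfl <;> simp_all
    omega

lemma sf_reorder {f : Fin n → ℕ} {p q r b : Fin n} (hpq : p ≠ q) (hpr : p ≠ r) (hqr : q ≠ r)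
    (hf : f = Pi.single p 1 + Pi.single q 1 + Pi.single r 1) (hb : f b = 1) :
    ∃ u v, u ≠ v ∧ b ≠ u ∧ b ≠ v ∧
      f = Pi.single b 1 + Pi.single u 1 + Pi.single v 1 := by
  have hmem : b = p ∨ b = q ∨ b = r := by
    by_contra hc
    push_neg at hc
    obtain ⟨c1, c2, c3⟩ := hc
    rw [hf] at hb
    simp only [Pi.add_apply, Pi.single_apply, if_neg c1, if_neg c2, if_neg c3] at hb
    omega
  rcases hmem with rfl | rfl | rfl
  · exact ⟨q, r, hqr, hpq, hpr, hf⟩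
  · exact ⟨p, r, hpr, Ne.symm hpq, hqr, by rw [hf]; ring⟩
  · exact ⟨p, q, hpq, Ne.symm hpr, Ne.symm hqr, by rw [hf]; ring⟩

lemma sf_reorder2 {g : Fin n → ℕ} {p q r b c : Fin n} (hpq : p ≠ q) (hpr : p ≠ r) (hqr : q ≠ r)
    (hg : g = Pi.single p 1 + Pi.single q 1 + Pi.single r 1)
    (hbc : b ≠ c) (hb : g b = 1) (hc : g c = 1) :
    ∃ u, u ≠ b ∧ u ≠ c ∧ g = Pi.single b 1 + Pi.single c 1 + Pi.single u 1 := by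
  obtain ⟨u1, u2, h12, hb1, hb2, hg2⟩ := sf_reorder hpq hpr hqr hg hb
  have hcmem : c = u1 ∨ c = u2 := by
    by_contra hcc
    push_neg at hcc
    obtain ⟨c1, c2⟩ := hcc
    rw [hg2] at hc
    simp only [Pi.add_apply, Pi.single_apply, if_neg hbc.symm, if_neg c1, if_neg c2] at hc
    omega
  rcases hcmem with rfl | rfl
  · exact ⟨u2, (Ne.symm hb2), (Ne.symm h12), hg2⟩
  · exact ⟨u1, (Ne.symm hb1), h12, by rw [hg2]; ring⟩

lemma card4 {k1 k2 k3 k4 : Fin n} (h12 : k1 ≠ k2) (h13 : k1 ≠ k3) (h14 : k1 ≠ k4)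
    (h23 : k2 ≠ k3) (h24 : k2 ≠ k4) (h34 : k3 ≠ k4) :
    ({k1, k2, k3, k4} : Finset (Fin n)).card = 4 := by
  rw [Finset.card_insert_of_notMem (by simp [h12, h13, h14]),
    Finset.card_insert_of_notMem (by simp [h23, h24]),
    Finset.card_insert_of_notMem (by simp [h34]), Finset.card_singleton]

lemma sf3_le {a b c : Fin n} (hab : a ≠ b) (hac : a ≠ c) (hbc : b ≠ c) :
    ∀ i, (Pi.single a 1 + Pi.single b 1 + Pi.single c 1 : Fin n → ℕ) i ≤ 1 := by
  intro i
  simp only [Pi.add_apply, Pi.single_apply]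
  split_ifs <;> omega

lemma sf3_supp {a b c : Fin n} {K : Finset (Fin n)} (ha : a ∈ K) (hb : b ∈ K) (hc : c ∈ K) :
    ∀ i, (Pi.single a 1 + Pi.single b 1 + Pi.single c 1 : Fin n → ℕ) i ≠ 0 → i ∈ K := by
  intro i hi
  by_cases e1 : i = a
  · subst e1; exact ha
  by_cases e2 : i = b
  · subst e2; exact hb
  by_cases e3 : i = c
  · subst e3; exact hc
  · exfalso
    simp only [Pi.add_apply, Pi.single_apply, if_neg e1, if_neg e2, if_neg e3] at hi
    omega

lemma sf3_mdeg {a b c : Fin n} :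
    mdeg (Pi.single a 1 + Pi.single b 1 + Pi.single c 1 : Fin n → ℕ) = 3 := by
  simp [mdeg_add, mdeg_single]

lemma second_elt {G : Set (Fin n → ℕ)}
    (h4 : ∀ K : Finset (Fin n), K.card = 4 →
      {v ∈ G | (∀ i, v i ≤ 1) ∧ ∀ i, v i ≠ 0 → i ∈ K}.ncard = 0 ∨
        2 ≤ {v ∈ G | (∀ i, v i ≤ 1) ∧ ∀ i, v i ≠ 0 → i ∈ K}.ncard)
    {K : Finset (Fin n)} (hK : K.card = 4) {g : Fin n → ℕ} (hg : g ∈ G)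
    (hgsf : ∀ i, g i ≤ 1) (hgsupp : ∀ i, g i ≠ 0 → i ∈ K) :
    ∃ w ∈ G, w ≠ g ∧ (∀ i, w i ≤ 1) ∧ (∀ i, w i ≠ 0 → i ∈ K) := by
  have hgS : g ∈ {v ∈ G | (∀ i, v i ≤ 1) ∧ ∀ i, v i ≠ 0 → i ∈ K} := ⟨hg, hgsf, hgsupp⟩
  have hfin : {v ∈ G | (∀ i, v i ≤ 1) ∧ ∀ i, v i ≠ 0 → i ∈ K}.Finite := by
    apply Set.Finite.subset (Set.finite_Icc (0 : Fin n → ℕ) 1)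
    intro v hv
    rw [Set.mem_Icc]
    exact ⟨fun i => Nat.zero_le _, fun i => hv.2.1 i⟩
  rcases h4 K hK with h0 | h2
  · have hpos : 0 < {v ∈ G | (∀ i, v i ≤ 1) ∧ ∀ i, v i ≠ 0 → i ∈ K}.ncard :=
      (Set.ncard_pos hfin).mpr ⟨g, hgS⟩
    exact absurd h0 (Nat.pos_iff_ne_zero.mp hpos)
  · have hlt : 1 < {v ∈ G | (∀ i, v i ≤ 1) ∧ ∀ i, v i ≠ 0 → i ∈ K}.ncard :=
      lt_of_lt_of_le one_lt_two h2
    obtain ⟨w, hwS, hwne⟩ := Set.exists_ne_of_one_lt_ncard hlt g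
    exact ⟨w, hwS.1, hwne, hwS.2.1, hwS.2.2⟩

lemma sf_in_four {w : Fin n → ℕ} {k1 k2 k3 k4 : Fin n}
    (h12 : k1 ≠ k2) (h13 : k1 ≠ k3) (h14 : k1 ≠ k4)
    (h23 : k2 ≠ k3) (h24 : k2 ≠ k4) (h34 : k3 ≠ k4)
    (h3 : mdeg w = 3) (hsf : ∀ i, w i ≤ 1)
    (hsupp : ∀ i, w i ≠ 0 → i ∈ ({k1, k2, k3, k4} : Finset (Fin n))) :
    w = Pi.single k2 1 + Pi.single k3 1 + Pi.single k4 1 ∨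
    w = Pi.single k1 1 + Pi.single k3 1 + Pi.single k4 1 ∨
    w = Pi.single k1 1 + Pi.single k2 1 + Pi.single k4 1 ∨
    w = Pi.single k1 1 + Pi.single k2 1 + Pi.single k3 1 := by
  have hval : ∀ k, k ≠ k1 → k ≠ k2 → k ≠ k3 → k ≠ k4 → w k = 0 := by
    intro k e1 e2 e3 e4
    by_contra hc
    have := hsupp k hc
    simp only [Finset.mem_insert, Finset.mem_singleton] at this
    tauto
  have hsum : w k1 + w k2 + w k3 + w k4 = 3 := by
    have hs : ∑ k ∈ ({k1, k2, k3, k4} : Finset (Fin n)), w k = ∑ k ∈ Finset.univ, w k := by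
      apply Finset.sum_subset (Finset.subset_univ _)
      intro x _ hx
      by_contra hc
      exact hx (hsupp x hc)
    rw [Finset.sum_insert (by simp [h12, h13, h14]),
      Finset.sum_insert (by simp [h23, h24]),
      Finset.sum_insert (by simp [h34]), Finset.sum_singleton] at hs
    have : mdeg w = ∑ k ∈ Finset.univ, w k := rfl
    omega
  have hb1 := hsf k1
  have hb2 := hsf k2
  have hb3 := hsf k3
  have hb4 := hsf k4
  have hz : w k1 = 0 ∨ w k2 = 0 ∨ w k3 = 0 ∨ w k4 = 0 := by omega
  rcases hz with hz | hz | hz | hz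
  · exact Or.inl (eq_vec3 h23 h24 h34 (by omega) (by omega) (by omega)
      (fun k e2 e3 e4 => by
        by_cases e1 : k = k1
        · subst e1; exact hz
        · exact hval k e1 e2 e3 e4))
  · exact Or.inr (Or.inl (eq_vec3 h13 h14 h34 (by omega) (by omega) (by omega)
      (fun k e1 e3 e4 => by
        by_cases e2 : k = k2
        · subst e2; exact hz
        · exact hval k e1 e2 e3 e4)))
  · exact Or.inr (Or.inr (Or.inl (eq_vec3 h12 h14 h24 (by omega) (by omega) (by omega)
      (fun k e1 e2 e4 => by
        by_cases e3 : k = k3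
        · subst e3; exact hz
        · exact hval k e1 e2 e3 e4))))
  · exact Or.inr (Or.inr (Or.inr (eq_vec3 h12 h13 h23 (by omega) (by omega) (by omega)
      (fun k e1 e2 e3 => by
        by_cases e4 : k = k4
        · subst e4; exact hz
        · exact hval k e1 e2 e3 e4))))

lemma mem21 {G : Set (Fin n → ℕ)}
    (hnsf : ∀ v : Fin n → ℕ, mdeg v = 3 → (∃ i, 2 ≤ v i) → v ∈ G) (a b : Fin n) :
    (Pi.single a 2 + Pi.single b 1 : Fin n → ℕ) ∈ G := by
  apply hnsf _ (by simp [mdeg_add, mdeg_single])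
  refine ⟨a, ?_⟩
  simp only [Pi.add_apply, Pi.single_apply, eq_self_iff_true, if_true]
  split_ifs <;> omega

lemma configA {G : Set (Fin n → ℕ)}
    (hnsf : ∀ v : Fin n → ℕ, mdeg v = 3 → (∃ i, 2 ≤ v i) → v ∈ G)
    {f g : Fin n → ℕ} {a a' b : Fin n}
    (haa' : a ≠ a') (hab : a ≠ b) (ha'b : a' ≠ b)
    (hfG : f ∈ G) (hgG : g ∈ G)
    (hf : f = Pi.single a 2 + Pi.single b 1) (hg : g = Pi.single a' 2 + Pi.single b 1) :
    pathBetween G 3 f g := by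
  subst hf hg
  have hp2G : (Pi.single a 2 + Pi.single a' 1 : Fin n → ℕ) ∈ G := mem21 hnsf a a'
  have hp3G : (Pi.single a' 2 + Pi.single a 1 : Fin n → ℕ) ∈ G := mem21 hnsf a' a
  refine path_trans (v := Pi.single a 2 + Pi.single a' 1) ?_
    (path_step hfG hp2G ?_)
    (path_trans (v := Pi.single a' 2 + Pi.single a 1) ?_
      (path_step hp2G hp3G ?_) (path_step hp3G hgG ?_))
  · intro k
    simp only [Pi.sup_apply, Pi.add_apply, Pi.single_apply]
    split_ifs <;> omega
  · rw [show (Pi.single a 2 + Pi.single b 1 : Fin n → ℕ) ⊔ (Pi.single a 2 + Pi.single a' 1)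
        = Pi.single a 2 + Pi.single b 1 + Pi.single a' 1 from by
      funext k
      simp only [Pi.sup_apply, Pi.add_apply, Pi.single_apply]
      split_ifs <;> omega]
    simp [mdeg_add, mdeg_single]
  · intro k
    simp only [Pi.sup_apply, Pi.add_apply, Pi.single_apply]
    split_ifs <;> omega
  · rw [show (Pi.single a 2 + Pi.single a' 1 : Fin n → ℕ) ⊔ (Pi.single a' 2 + Pi.single a 1)
        = Pi.single a 2 + Pi.single a' 2 from by
      funext k
      simp only [Pi.sup_apply, Pi.add_apply, Pi.single_apply]
      split_ifs <;> omega]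
    simp [mdeg_add, mdeg_single]
  · rw [show (Pi.single a' 2 + Pi.single a 1 : Fin n → ℕ) ⊔ (Pi.single a' 2 + Pi.single b 1)
        = Pi.single a' 2 + Pi.single a 1 + Pi.single b 1 from by
      funext k
      simp only [Pi.sup_apply, Pi.add_apply, Pi.single_apply]
      split_ifs <;> omega]
    simp [mdeg_add, mdeg_single]

lemma configB {G : Set (Fin n → ℕ)}
    (hG : ∀ v ∈ G, mdeg v = 3)
    (hnsf : ∀ v : Fin n → ℕ, mdeg v = 3 → (∃ i, 2 ≤ v i) → v ∈ G)
    (h4 : ∀ K : Finset (Fin n), K.card = 4 →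
      {v ∈ G | (∀ i, v i ≤ 1) ∧ ∀ i, v i ≠ 0 → i ∈ K}.ncard = 0 ∨
        2 ≤ {v ∈ G | (∀ i, v i ≤ 1) ∧ ∀ i, v i ≠ 0 → i ∈ K}.ncard)
    {f g : Fin n → ℕ} {a b j1 j2 : Fin n}
    (hab : a ≠ b) (haj1 : a ≠ j1) (haj2 : a ≠ j2)
    (hbj1 : b ≠ j1) (hbj2 : b ≠ j2) (hj12 : j1 ≠ j2)
    (hfG : f ∈ G) (hgG : g ∈ G)
    (hf : f = Pi.single a 2 + Pi.single b 1)
    (hg : g = Pi.single b 1 + Pi.single j1 1 + Pi.single j2 1)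
    (hex1 : (Pi.single a 1 + Pi.single b 1 + Pi.single j1 1 : Fin n → ℕ) ∉ G)
    (hex2 : (Pi.single a 1 + Pi.single b 1 + Pi.single j2 1 : Fin n → ℕ) ∉ G) :
    pathBetween G 3 f g := by
  subst hf hg
  obtain ⟨w, hwG, hwne, hwsf, hwsupp⟩ := second_elt h4 (card4 hab haj1 haj2 hbj1 hbj2 hj12)
    hgG (sf3_le hbj1 hbj2 hj12) (sf3_supp (by simp) (by simp) (by simp))
  rcases sf_in_four hab haj1 haj2 hbj1 hbj2 hj12 (hG w hwG) hwsf hwsupp with hw | hw | hw | hw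
  · exact absurd hw hwne
  · subst hw
    have hp2G : (Pi.single a 2 + Pi.single j1 1 : Fin n → ℕ) ∈ G := mem21 hnsf a j1
    refine path_trans (v := Pi.single a 2 + Pi.single j1 1) ?_
      (path_step hfG hp2G ?_)
      (path_trans (v := Pi.single a 1 + Pi.single j1 1 + Pi.single j2 1) ?_
        (path_step hp2G hwG ?_) (path_step hwG hgG ?_))
    · intro k
      simp only [Pi.sup_apply, Pi.add_apply, Pi.single_apply]
      split_ifs <;> omega
    · rw [show (Pi.single a 2 + Pi.single b 1 : Fin n → ℕ) ⊔ (Pi.single a 2 + Pi.single j1 1)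
          = Pi.single a 2 + Pi.single b 1 + Pi.single j1 1 from by
        funext k
        simp only [Pi.sup_apply, Pi.add_apply, Pi.single_apply]
        split_ifs <;> omega]
      simp [mdeg_add, mdeg_single]
    · intro k
      simp only [Pi.sup_apply, Pi.add_apply, Pi.single_apply]
      split_ifs <;> omega
    · rw [show (Pi.single a 2 + Pi.single j1 1 : Fin n → ℕ) ⊔
            (Pi.single a 1 + Pi.single j1 1 + Pi.single j2 1)
          = Pi.single a 2 + Pi.single j1 1 + Pi.single j2 1 from by
        funext k
        simp only [Pi.sup_apply, Pi.add_apply, Pi.single_apply]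
        split_ifs <;> omega]
      simp [mdeg_add, mdeg_single]
    · rw [show (Pi.single a 1 + Pi.single j1 1 + Pi.single j2 1 : Fin n → ℕ) ⊔
            (Pi.single b 1 + Pi.single j1 1 + Pi.single j2 1)
          = Pi.single a 1 + Pi.single b 1 + Pi.single j1 1 + Pi.single j2 1 from by
        funext k
        simp only [Pi.sup_apply, Pi.add_apply, Pi.single_apply]
        split_ifs <;> omega]
      simp [mdeg_add, mdeg_single]
  · exact absurd (hw ▸ hwG) hex2
  · exact absurd (hw ▸ hwG) hex1

lemma configC {G : Set (Fin n → ℕ)}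
    (hG : ∀ v ∈ G, mdeg v = 3)
    (h4 : ∀ K : Finset (Fin n), K.card = 4 →
      {v ∈ G | (∀ i, v i ≤ 1) ∧ ∀ i, v i ≠ 0 → i ∈ K}.ncard = 0 ∨
        2 ≤ {v ∈ G | (∀ i, v i ≤ 1) ∧ ∀ i, v i ≠ 0 → i ∈ K}.ncard)
    {f g : Fin n → ℕ} {c0 d1 d2 u1 u2 : Fin n}
    (hcd1 : c0 ≠ d1) (hcd2 : c0 ≠ d2) (hcu1 : c0 ≠ u1) (hcu2 : c0 ≠ u2)
    (hd12 : d1 ≠ d2) (hd1u1 : d1 ≠ u1) (hd1u2 : d1 ≠ u2)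
    (hd2u1 : d2 ≠ u1) (hd2u2 : d2 ≠ u2) (hu12 : u1 ≠ u2)
    (hfG : f ∈ G) (hgG : g ∈ G)
    (hf : f = Pi.single c0 1 + Pi.single d1 1 + Pi.single d2 1)
    (hg : g = Pi.single c0 1 + Pi.single u1 1 + Pi.single u2 1)
    (hex1 : (Pi.single c0 1 + Pi.single d2 1 + Pi.single u1 1 : Fin n → ℕ) ∉ G)
    (hex2 : (Pi.single c0 1 + Pi.single d1 1 + Pi.single u1 1 : Fin n → ℕ) ∉ G)
    (hex3 : (Pi.single c0 1 + Pi.single u2 1 + Pi.single d1 1 : Fin n → ℕ) ∉ G)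
    (hex4 : (Pi.single c0 1 + Pi.single u1 1 + Pi.single d1 1 : Fin n → ℕ) ∉ G) :
    pathBetween G 3 f g := by
  subst hf hg
  obtain ⟨w, hwG, hwne, hwsf, hwsupp⟩ := second_elt h4
    (card4 hcd1 hcd2 hcu1 hd12 hd1u1 hd2u1)
    hfG (sf3_le hcd1 hcd2 hd12) (sf3_supp (by simp) (by simp) (by simp))
  rcases sf_in_four hcd1 hcd2 hcu1 hd12 hd1u1 hd2u1 (hG w hwG) hwsf hwsupp with hw | hw | hw | hw
  · -- w = d1 + d2 + u1
    subst hw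
    obtain ⟨w', hw'G, hw'ne, hw'sf, hw'supp⟩ := second_elt h4
      (card4 hcu1 hcu2 hcd1 hu12 (Ne.symm hd1u1) (Ne.symm hd1u2))
      hgG (sf3_le hcu1 hcu2 hu12) (sf3_supp (by simp) (by simp) (by simp))
    rcases sf_in_four hcu1 hcu2 hcd1 hu12 (Ne.symm hd1u1) (Ne.symm hd1u2)
        (hG w' hw'G) hw'sf hw'supp with hw' | hw' | hw' | hw'
    · -- w' = u1 + u2 + d1
      subst hw'
      refine path_trans (v := Pi.single d1 1 + Pi.single d2 1 + Pi.single u1 1) ?_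
        (path_step hfG hwG ?_)
        (path_trans (v := Pi.single u1 1 + Pi.single u2 1 + Pi.single d1 1) ?_
          (path_step hwG hw'G ?_) (path_step hw'G hgG ?_))
      · intro k
        simp only [Pi.sup_apply, Pi.add_apply, Pi.single_apply]
        split_ifs <;> omega
      · rw [show (Pi.single c0 1 + Pi.single d1 1 + Pi.single d2 1 : Fin n → ℕ) ⊔
              (Pi.single d1 1 + Pi.single d2 1 + Pi.single u1 1)
            = Pi.single c0 1 + Pi.single d1 1 + Pi.single d2 1 + Pi.single u1 1 from by
          funext k
          simp only [Pi.sup_apply, Pi.add_apply, Pi.single_apply]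
          split_ifs <;> omega]
        simp [mdeg_add, mdeg_single]
      · intro k
        simp only [Pi.sup_apply, Pi.add_apply, Pi.single_apply]
        split_ifs <;> omega
      · rw [show (Pi.single d1 1 + Pi.single d2 1 + Pi.single u1 1 : Fin n → ℕ) ⊔
              (Pi.single u1 1 + Pi.single u2 1 + Pi.single d1 1)
            = Pi.single d1 1 + Pi.single d2 1 + Pi.single u1 1 + Pi.single u2 1 from by
          funext k
          simp only [Pi.sup_apply, Pi.add_apply, Pi.single_apply]
          split_ifs <;> omega]
        simp [mdeg_add, mdeg_single]
      · rw [show (Pi.single u1 1 + Pi.single u2 1 + Pi.single d1 1 : Fin n → ℕ) ⊔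
              (Pi.single c0 1 + Pi.single u1 1 + Pi.single u2 1)
            = Pi.single c0 1 + Pi.single u1 1 + Pi.single u2 1 + Pi.single d1 1 from by
          funext k
          simp only [Pi.sup_apply, Pi.add_apply, Pi.single_apply]
          split_ifs <;> omega]
        simp [mdeg_add, mdeg_single]
    · exact absurd (hw' ▸ hw'G) hex3
    · exact absurd (hw' ▸ hw'G) hex4
    · exact absurd hw' hw'ne
  · exact absurd (hw ▸ hwG) hex1
  · exact absurd (hw ▸ hwG) hex2
  · exact absurd hw hwne

lemma configD {G : Set (Fin n → ℕ)}
    (hG : ∀ v ∈ G, mdeg v = 3)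
    (h4 : ∀ K : Finset (Fin n), K.card = 4 →
      {v ∈ G | (∀ i, v i ≤ 1) ∧ ∀ i, v i ≠ 0 → i ∈ K}.ncard = 0 ∨
        2 ≤ {v ∈ G | (∀ i, v i ≤ 1) ∧ ∀ i, v i ≠ 0 → i ∈ K}.ncard)
    {f : Fin n → ℕ} {d1 d2 d3 u1 : Fin n}
    (h12 : d1 ≠ d2) (h13 : d1 ≠ d3) (h1u : d1 ≠ u1)
    (h23 : d2 ≠ d3) (h2u : d2 ≠ u1) (h3u : d3 ≠ u1)
    (hfG : f ∈ G)
    (hf : f = Pi.single d1 1 + Pi.single d2 1 + Pi.single d3 1)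
    (hex1 : (Pi.single d2 1 + Pi.single d3 1 + Pi.single u1 1 : Fin n → ℕ) ∉ G)
    (hex2 : (Pi.single d1 1 + Pi.single d3 1 + Pi.single u1 1 : Fin n → ℕ) ∉ G)
    (hex3 : (Pi.single d1 1 + Pi.single d2 1 + Pi.single u1 1 : Fin n → ℕ) ∉ G) :
    False := by
  subst hf
  obtain ⟨w, hwG, hwne, hwsf, hwsupp⟩ := second_elt h4 (card4 h12 h13 h1u h23 h2u h3u)
    hfG (sf3_le h12 h13 h23) (sf3_supp (by simp) (by simp) (by simp))
  rcases sf_in_four h12 h13 h1u h23 h2u h3u (hG w hwG) hwsf hwsupp with hw | hw | hw | hw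
  · exact absurd (hw ▸ hwG) hex1
  · exact absurd (hw ▸ hwG) hex2
  · exact absurd (hw ▸ hwG) hex3
  · exact absurd hw hwne

lemma share2_path {G : Set (Fin n → ℕ)} {f g : Fin n → ℕ} {a b c : Fin n}
    (hab : a ≠ b) (hac : a ≠ c) (hbc : b ≠ c)
    (hfG : f ∈ G) (hgG : g ∈ G)
    (hf : f = Pi.single a 1 + Pi.single b 1 + Pi.single c 1)
    (hga : g a = 0) (hgb : g b = 1) (hgc : g c = 1)
    (hgsf : ∀ k, g k ≤ 1) (hg3 : mdeg g = 3) : pathBetween G 3 f g := by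
  obtain ⟨p, q, r, hpq, hpr, hqr, hgf⟩ := extract_sf hg3 hgsf
  obtain ⟨u, hub, huc, hgform⟩ := sf_reorder2 hpq hpr hqr hgf hbc hgb hgc
  have hgu : g u = 1 := by
    rw [hgform]
    simp [Pi.single_apply, hub, huc]
  have hua : u ≠ a := by
    intro e
    rw [e] at hgu
    omega
  subst hf
  subst hgform
  apply path_step hfG hgG
  rw [show (Pi.single a 1 + Pi.single b 1 + Pi.single c 1 : Fin n → ℕ) ⊔
        (Pi.single b 1 + Pi.single c 1 + Pi.single u 1)
      = Pi.single a 1 + Pi.single b 1 + Pi.single c 1 + Pi.single u 1 from by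
    funext k
    simp only [Pi.sup_apply, Pi.add_apply, Pi.single_apply]
    split_ifs <;> omega]
  simp [mdeg_add, mdeg_single]

lemma f_shape {G : Set (Fin n → ℕ)}
    (hnsf : ∀ v : Fin n → ℕ, mdeg v = 3 → (∃ i, 2 ≤ v i) → v ∈ G)
    {f g : Fin n → ℕ} {i0 j0 a : Fin n}
    (hf3 : mdeg f = 3)
    (hbf : ∀ i j, g i < f i → f j < g j → mv f i j ∉ G)
    (hi0 : g i0 < f i0) (hj0 : f j0 < g j0) (ha : 2 ≤ f a) :
    a = i0 ∧ f i0 = 2 ∧ (∀ i, g i < f i → i = i0) ∧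
      ∃ b, b ≠ i0 ∧ b ≠ j0 ∧ f = Pi.single i0 2 + Pi.single b 1 ∧ g b = 1 := by
  have hij0 : i0 ≠ j0 := by intro e; rw [e] at hi0; omega
  have F0 := bad_facts hnsf hf3 hi0 hj0 (hbf i0 j0 hi0 hj0)
  have hfj0 : f j0 = 0 := F0.2.1
  have hai0 : a = i0 := by
    by_contra hc
    by_cases haj : a = j0
    · rw [haj] at ha; omega
    · have := F0.2.2 a hc haj; omega
  have hfi0 : f i0 = 2 := le_antisymm F0.1 (hai0 ▸ ha)
  have hD : ∀ i, g i < f i → i = i0 := by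
    intro i hi
    by_contra hc
    have Fi := bad_facts hnsf hf3 hi hj0 (hbf i j0 hi hj0)
    have := Fi.2.2 i0 (fun e => hc e.symm) hij0
    omega
  have hle1 : ∀ k, k ≠ i0 → f k ≤ 1 := by
    intro k hk
    by_cases hkj : k = j0
    · rw [hkj]; omega
    · exact F0.2.2 k hk hkj
  obtain ⟨b, hbi0, hform⟩ := extract_two hf3 hfi0 hle1
  have hfb : f b = 1 := by
    rw [hform]
    simp [Pi.single_apply, hbi0]
  have hbj0 : b ≠ j0 := by
    intro e
    rw [e] at hfb
    omega
  have hgb : g b = 1 := by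
    have h1 : ¬ (g b < f b) := fun hlt => hbi0 (hD b hlt)
    by_cases h2 : f b < g b
    · have := (bad_facts hnsf hf3 hi0 h2 (hbf i0 b hi0 h2)).2.1
      omega
    · omega
  exact ⟨hai0, hfi0, hD, b, hbi0, hbj0, hform, hgb⟩

lemma bad_AA {G : Set (Fin n → ℕ)}
    (hG : ∀ v ∈ G, mdeg v = 3)
    (hnsf : ∀ v : Fin n → ℕ, mdeg v = 3 → (∃ i, 2 ≤ v i) → v ∈ G)
    {f g : Fin n → ℕ} {i0 j0 : Fin n}
    (hfG : f ∈ G) (hgG : g ∈ G)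
    (hbf : ∀ i j, g i < f i → f j < g j → mv f i j ∉ G)
    (hbg : ∀ i j, f i < g i → g j < f j → mv g i j ∉ G)
    (hi0 : g i0 < f i0) (hj0 : f j0 < g j0)
    (hf2 : ∃ x, 2 ≤ f x) (hg2 : ∃ x, 2 ≤ g x) : pathBetween G 3 f g := by
  obtain ⟨x, hx⟩ := hf2
  obtain ⟨y, hy⟩ := hg2
  have hij0 : i0 ≠ j0 := by intro e; rw [e] at hi0; omega
  obtain ⟨-, hfi0, hD, b, hbi0, hbj0, hform, hgb⟩ := f_shape hnsf (hG f hfG) hbf hi0 hj0 hx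
  obtain ⟨-, hgj0, hU, b', hb'j0, hb'i0, hgform, hfb'⟩ := f_shape hnsf (hG g hgG) hbg hj0 hi0 hy
  have hbb : b' = b := by
    by_contra hc
    rw [hform] at hfb'
    simp only [Pi.add_apply, Pi.single_apply, if_neg hb'i0, if_neg hc] at hfb'
    omega
  subst hbb
  exact configA hnsf hij0 (Ne.symm hbi0) (Ne.symm hbj0) hfG hgG hform hgform

lemma bad_mixed {G : Set (Fin n → ℕ)}
    (hG : ∀ v ∈ G, mdeg v = 3)
    (hnsf : ∀ v : Fin n → ℕ, mdeg v = 3 → (∃ i, 2 ≤ v i) → v ∈ G)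
    (h4 : ∀ K : Finset (Fin n), K.card = 4 →
      {v ∈ G | (∀ i, v i ≤ 1) ∧ ∀ i, v i ≠ 0 → i ∈ K}.ncard = 0 ∨
        2 ≤ {v ∈ G | (∀ i, v i ≤ 1) ∧ ∀ i, v i ≠ 0 → i ∈ K}.ncard)
    {f g : Fin n → ℕ} {i0 j0 : Fin n}
    (hfG : f ∈ G) (hgG : g ∈ G)
    (hbf : ∀ i j, g i < f i → f j < g j → mv f i j ∉ G)
    (hbg : ∀ i j, f i < g i → g j < f j → mv g i j ∉ G)
    (hi0 : g i0 < f i0) (hj0 : f j0 < g j0)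
    (hf2 : ∃ x, 2 ≤ f x) (hgsf : ∀ x, g x ≤ 1) : pathBetween G 3 f g := by
  obtain ⟨x, hx⟩ := hf2
  obtain ⟨-, hfi0, hD, b, hbi0, hbj0, hform, hgb⟩ := f_shape hnsf (hG f hfG) hbf hi0 hj0 hx
  have hij0 : i0 ≠ j0 := by intro e; rw [e] at hi0; omega
  have hgi0 : g i0 = 0 := (bad_facts hnsf (hG g hgG) hj0 hi0 (hbg j0 i0 hj0 hi0)).2.1
  obtain ⟨p, q, r, hpq, hpr, hqr, hgf⟩ := extract_sf (hG g hgG) hgsf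
  obtain ⟨j1, j2, hj12, hbj1, hbj2, hgform⟩ := sf_reorder hpq hpr hqr hgf hgb
  have hgj1 : g j1 = 1 := by
    rw [hgform]
    simp [Pi.single_apply, (Ne.symm hbj1), hj12]
  have hgj2 : g j2 = 1 := by
    rw [hgform]
    simp [Pi.single_apply, (Ne.symm hbj2), (Ne.symm hj12)]
  have hj1i0 : j1 ≠ i0 := by intro e; rw [e] at hgj1; omega
  have hj2i0 : j2 ≠ i0 := by intro e; rw [e] at hgj2; omega
  have hfj1 : f j1 = 0 := by
    rw [hform]
    simp [Pi.single_apply, hj1i0, (Ne.symm hbj1)]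
  have hfj2 : f j2 = 0 := by
    rw [hform]
    simp [Pi.single_apply, hj2i0, (Ne.symm hbj2)]
  have hU1 : f j1 < g j1 := by omega
  have hU2 : f j2 < g j2 := by omega
  have hmv1 : mv f i0 j1 = Pi.single i0 1 + Pi.single b 1 + Pi.single j1 1 := by
    funext k
    rw [mv_apply, hform]
    simp only [Pi.add_apply, Pi.single_apply]
    split_ifs <;> omega
  have hmv2 : mv f i0 j2 = Pi.single i0 1 + Pi.single b 1 + Pi.single j2 1 := by
    funext k
    rw [mv_apply, hform]
    simp only [Pi.add_apply, Pi.single_apply]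
    split_ifs <;> omega
  exact configB hG hnsf h4 (Ne.symm hbi0) (Ne.symm hj1i0) (Ne.symm hj2i0) hbj1 hbj2 hj12
    hfG hgG hform hgform (hmv1 ▸ hbf i0 j1 hi0 hU1) (hmv2 ▸ hbf i0 j2 hi0 hU2)

lemma bad_CC {G : Set (Fin n → ℕ)}
    (hG : ∀ v ∈ G, mdeg v = 3)
    (h4 : ∀ K : Finset (Fin n), K.card = 4 →
      {v ∈ G | (∀ i, v i ≤ 1) ∧ ∀ i, v i ≠ 0 → i ∈ K}.ncard = 0 ∨
        2 ≤ {v ∈ G | (∀ i, v i ≤ 1) ∧ ∀ i, v i ≠ 0 → i ∈ K}.ncard)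
    {f g : Fin n → ℕ} {x1 x2 y : Fin n}
    (h12 : x1 ≠ x2) (h1y : x1 ≠ y) (h2y : x2 ≠ y)
    (hfG : f ∈ G) (hgG : g ∈ G)
    (hbf : ∀ i j, g i < f i → f j < g j → mv f i j ∉ G)
    (hbg : ∀ i j, f i < g i → g j < f j → mv g i j ∉ G)
    (hform : f = Pi.single x1 1 + Pi.single x2 1 + Pi.single y 1)
    (hz1 : g x1 = 0) (hz2 : g x2 = 0) (h1y' : g y = 1)
    (hgsf : ∀ x, g x ≤ 1) : pathBetween G 3 f g := by
  have hfx1 : f x1 = 1 := by rw [hform]; simp [Pi.single_apply, h12, h1y]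
  have hfx2 : f x2 = 1 := by rw [hform]; simp [Pi.single_apply, (Ne.symm h12), h2y]
  have hfy : f y = 1 := by rw [hform]; simp [Pi.single_apply, (Ne.symm h1y), (Ne.symm h2y)]
  have hf0 : ∀ k, k ≠ x1 → k ≠ x2 → k ≠ y → f k = 0 := by
    intro k e1 e2 e3
    rw [hform]
    simp [Pi.single_apply, e1, e2, e3]
  obtain ⟨p, q, r, hpq, hpr, hqr, hgf⟩ := extract_sf (hG g hgG) hgsf
  obtain ⟨u1, u2, hu12, hyu1, hyu2, hgform⟩ := sf_reorder hpq hpr hqr hgf h1y'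
  have hgu1 : g u1 = 1 := by
    rw [hgform]; simp [Pi.single_apply, (Ne.symm hyu1), hu12]
  have hgu2 : g u2 = 1 := by
    rw [hgform]; simp [Pi.single_apply, (Ne.symm hyu2), (Ne.symm hu12)]
  have hg0 : ∀ k, k ≠ y → k ≠ u1 → k ≠ u2 → g k = 0 := by
    intro k e1 e2 e3
    rw [hgform]
    simp [Pi.single_apply, e1, e2, e3]
  have hu1x1 : u1 ≠ x1 := by intro e; rw [e] at hgu1; omega
  have hu1x2 : u1 ≠ x2 := by intro e; rw [e] at hgu1; omega
  have hu2x1 : u2 ≠ x1 := by intro e; rw [e] at hgu2; omega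
  have hu2x2 : u2 ≠ x2 := by intro e; rw [e] at hgu2; omega
  have hfu1 : f u1 = 0 := hf0 u1 hu1x1 hu1x2 (Ne.symm hyu1)
  have hfu2 : f u2 = 0 := hf0 u2 hu2x1 hu2x2 (Ne.symm hyu2)
  have hD1 : g x1 < f x1 := by omega
  have hD2 : g x2 < f x2 := by omega
  have hUu1 : f u1 < g u1 := by omega
  have hUu2 : f u2 < g u2 := by omega
  have hmv1 : mv f x1 u1 = Pi.single y 1 + Pi.single x2 1 + Pi.single u1 1 := by
    refine eq_vec3 (Ne.symm h2y) hyu1 (Ne.symm hu1x2)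
      (by simp only [mv_apply]; split_ifs <;> omega)
      (by simp only [mv_apply]; split_ifs <;> omega)
      (by simp only [mv_apply]; split_ifs <;> omega) ?_
    intro k e1 e2 e3
    by_cases e4 : k = x1
    · subst e4; simp only [mv_apply]; split_ifs <;> omega
    by_cases e5 : k = u2
    · subst e5; simp only [mv_apply]; split_ifs <;> omega
    · have h0 := hf0 k e4 e2 e1
      simp only [mv_apply]; split_ifs <;> omega
  have hmv2 : mv f x2 u1 = Pi.single y 1 + Pi.single x1 1 + Pi.single u1 1 := by
    refine eq_vec3 (Ne.symm h1y) hyu1 (Ne.symm hu1x1)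
      (by simp only [mv_apply]; split_ifs <;> omega)
      (by simp only [mv_apply]; split_ifs <;> omega)
      (by simp only [mv_apply]; split_ifs <;> omega) ?_
    intro k e1 e2 e3
    by_cases e4 : k = x2
    · subst e4; simp only [mv_apply]; split_ifs <;> omega
    by_cases e5 : k = u2
    · subst e5; simp only [mv_apply]; split_ifs <;> omega
    · have h0 := hf0 k e2 e4 e1
      simp only [mv_apply]; split_ifs <;> omega
  have hmv3 : mv g u1 x1 = Pi.single y 1 + Pi.single u2 1 + Pi.single x1 1 := by
    refine eq_vec3 hyu2 (Ne.symm h1y) hu2x1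
      (by simp only [mv_apply]; split_ifs <;> omega)
      (by simp only [mv_apply]; split_ifs <;> omega)
      (by simp only [mv_apply]; split_ifs <;> omega) ?_
    intro k e1 e2 e3
    by_cases e4 : k = u1
    · subst e4; simp only [mv_apply]; split_ifs <;> omega
    by_cases e5 : k = x2
    · subst e5; simp only [mv_apply]; split_ifs <;> omega
    · have h0 := hg0 k e1 e4 e2
      simp only [mv_apply]; split_ifs <;> omega
  have hmv4 : mv g u2 x1 = Pi.single y 1 + Pi.single u1 1 + Pi.single x1 1 := by
    refine eq_vec3 hyu1 (Ne.symm h1y) hu1x1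
      (by simp only [mv_apply]; split_ifs <;> omega)
      (by simp only [mv_apply]; split_ifs <;> omega)
      (by simp only [mv_apply]; split_ifs <;> omega) ?_
    intro k e1 e2 e3
    by_cases e4 : k = u2
    · subst e4; simp only [mv_apply]; split_ifs <;> omega
    by_cases e5 : k = x2
    · subst e5; simp only [mv_apply]; split_ifs <;> omega
    · have h0 := hg0 k e1 e2 e4
      simp only [mv_apply]; split_ifs <;> omega
  exact configC hG h4 (Ne.symm h1y) (Ne.symm h2y) hyu1 hyu2 h12 (Ne.symm hu1x1)
    (Ne.symm hu2x1) (Ne.symm hu1x2) (Ne.symm hu2x2) hu12 hfG hgG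
    (by rw [hform]; ring) hgform
    (hmv1 ▸ hbf x1 u1 hD1 hUu1) (hmv2 ▸ hbf x2 u1 hD2 hUu1)
    (hmv3 ▸ hbg u1 x1 hUu1 hD1) (hmv4 ▸ hbg u2 x1 hUu2 hD1)


lemma bad_SS {G : Set (Fin n → ℕ)}
    (hG : ∀ v ∈ G, mdeg v = 3)
    (h4 : ∀ K : Finset (Fin n), K.card = 4 →
      {v ∈ G | (∀ i, v i ≤ 1) ∧ ∀ i, v i ≠ 0 → i ∈ K}.ncard = 0 ∨
        2 ≤ {v ∈ G | (∀ i, v i ≤ 1) ∧ ∀ i, v i ≠ 0 → i ∈ K}.ncard)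
    {f g : Fin n → ℕ} {i0 j0 : Fin n}
    (hfG : f ∈ G) (hgG : g ∈ G)
    (hbf : ∀ i j, g i < f i → f j < g j → mv f i j ∉ G)
    (hbg : ∀ i j, f i < g i → g j < f j → mv g i j ∉ G)
    (hi0 : g i0 < f i0) (hj0 : f j0 < g j0)
    (hfsf : ∀ x, f x ≤ 1) (hgsf : ∀ x, g x ≤ 1) : pathBetween G 3 f g := by
  obtain ⟨a, b, c, hab, hac, hbc, hform⟩ := extract_sf (hG f hfG) hfsf
  have hfa : f a = 1 := by rw [hform]; simp [Pi.single_apply, hab, hac]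
  have hfb : f b = 1 := by rw [hform]; simp [Pi.single_apply, (Ne.symm hab), hbc]
  have hfc : f c = 1 := by rw [hform]; simp [Pi.single_apply, (Ne.symm hac), (Ne.symm hbc)]
  have hf0 : ∀ k, k ≠ a → k ≠ b → k ≠ c → f k = 0 := by
    intro k e1 e2 e3
    rw [hform]
    simp [Pi.single_apply, e1, e2, e3]
  by_cases hza : g a = 0 <;> by_cases hzb : g b = 0 <;> by_cases hzc : g c = 0
  · -- all zero : disjoint supports, config D, contradiction
    exfalso
    obtain ⟨u1, u2, u3, hu12, hu13, hu23, hgform⟩ := extract_sf (hG g hgG) hgsf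
    have hgu1 : g u1 = 1 := by rw [hgform]; simp [Pi.single_apply, hu12, hu13]
    have hu1a : u1 ≠ a := by intro e; rw [e] at hgu1; omega
    have hu1b : u1 ≠ b := by intro e; rw [e] at hgu1; omega
    have hu1c : u1 ≠ c := by intro e; rw [e] at hgu1; omega
    have hfu1 : f u1 = 0 := hf0 u1 hu1a hu1b hu1c
    have hDa : g a < f a := by omega
    have hDb : g b < f b := by omega
    have hDc : g c < f c := by omega
    have hUu1 : f u1 < g u1 := by omega
    have hmv1 : mv f a u1 = Pi.single b 1 + Pi.single c 1 + Pi.single u1 1 := by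
      funext k
      rw [mv_apply, hform]
      simp only [Pi.add_apply, Pi.single_apply]
      split_ifs <;> omega
    have hmv2 : mv f b u1 = Pi.single a 1 + Pi.single c 1 + Pi.single u1 1 := by
      funext k
      rw [mv_apply, hform]
      simp only [Pi.add_apply, Pi.single_apply]
      split_ifs <;> omega
    have hmv3 : mv f c u1 = Pi.single a 1 + Pi.single b 1 + Pi.single u1 1 := by
      funext k
      rw [mv_apply, hform]
      simp only [Pi.add_apply, Pi.single_apply]
      split_ifs <;> omega
    exact configD hG h4 hab hac (Ne.symm hu1a) hbc (Ne.symm hu1b) (Ne.symm hu1c) hfG hform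
      (hmv1 ▸ hbf a u1 hDa hUu1) (hmv2 ▸ hbf b u1 hDb hUu1) (hmv3 ▸ hbf c u1 hDc hUu1)
  · -- g a = 0, g b = 0, g c = 1 : two-zero, common c
    have h1c : g c = 1 := by have := hgsf c; omega
    exact bad_CC hG h4 hab hac hbc hfG hgG hbf hbg hform hza hzb h1c hgsf
  · -- g a = 0, g b = 1, g c = 0 : common b
    have h1b : g b = 1 := by have := hgsf b; omega
    exact bad_CC hG h4 hac hab (Ne.symm hbc) hfG hgG hbf hbg (by rw [hform]; ring)
      hza hzc h1b hgsf
  · -- g a = 0, g b = 1, g c = 1 : one zero at a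
    have h1b : g b = 1 := by have := hgsf b; omega
    have h1c : g c = 1 := by have := hgsf c; omega
    exact share2_path hab hac hbc hfG hgG hform hza h1b h1c hgsf (hG g hgG)
  · -- g a = 1, g b = 0, g c = 0 : common a
    have h1a : g a = 1 := by have := hgsf a; omega
    exact bad_CC hG h4 hbc (Ne.symm hab) (Ne.symm hac) hfG hgG hbf hbg (by rw [hform]; ring)
      hzb hzc h1a hgsf
  · -- g a = 1, g b = 0, g c = 1 : one zero at b
    have h1a : g a = 1 := by have := hgsf a; omega
    have h1c : g c = 1 := by have := hgsf c; omega
    exact share2_path (Ne.symm hab) hbc hac hfG hgG (by rw [hform]; ring)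
      hzb h1a h1c hgsf (hG g hgG)
  · -- g a = 1, g b = 1, g c = 0 : one zero at c
    have h1a : g a = 1 := by have := hgsf a; omega
    have h1b : g b = 1 := by have := hgsf b; omega
    exact share2_path (Ne.symm hac) (Ne.symm hbc) hab hfG hgG (by rw [hform]; ring)
      hzc h1a h1b hgsf (hG g hgG)
  · -- all one : f ≤ g, contradiction with hi0
    exfalso
    have h1a : g a = 1 := by have := hgsf a; omega
    have h1b : g b = 1 := by have := hgsf b; omega
    have h1c : g c = 1 := by have := hgsf c; omega
    have hi0mem : i0 = a ∨ i0 = b ∨ i0 = c := by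
      by_contra hcc
      push_neg at hcc
      have := hf0 i0 hcc.1 hcc.2.1 hcc.2.2
      omega
    rcases hi0mem with e | e | e <;> rw [e] at hi0 <;> omega

lemma bad_case {G : Set (Fin n → ℕ)}
    (hG : ∀ v ∈ G, mdeg v = 3)
    (hnsf : ∀ v : Fin n → ℕ, mdeg v = 3 → (∃ i, 2 ≤ v i) → v ∈ G)
    (h4 : ∀ K : Finset (Fin n), K.card = 4 →
      {v ∈ G | (∀ i, v i ≤ 1) ∧ ∀ i, v i ≠ 0 → i ∈ K}.ncard = 0 ∨
        2 ≤ {v ∈ G | (∀ i, v i ≤ 1) ∧ ∀ i, v i ≠ 0 → i ∈ K}.ncard)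
    {f g : Fin n → ℕ} (hfG : f ∈ G) (hgG : g ∈ G) (hne : f ≠ g)
    (hbf : ∀ i j, g i < f i → f j < g j → mv f i j ∉ G)
    (hbg : ∀ i j, f i < g i → g j < f j → mv g i j ∉ G) : pathBetween G 3 f g := by
  obtain ⟨i0, hi0⟩ : ∃ i, g i < f i := by
    by_contra hc
    push_neg at hc
    exact hne (eq_of_le_of_mdeg_le (fun i => hc i) (by rw [hG f hfG, hG g hgG]))
  obtain ⟨j0, hj0⟩ : ∃ j, f j < g j := by
    by_contra hc
    push_neg at hc
    exact hne (eq_of_le_of_mdeg_le (fun i => hc i) (by rw [hG f hfG, hG g hgG])).symm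
  by_cases hf2 : ∃ x, 2 ≤ f x
  · by_cases hg2 : ∃ x, 2 ≤ g x
    · exact bad_AA hG hnsf hfG hgG hbf hbg hi0 hj0 hf2 hg2
    · push_neg at hg2
      exact bad_mixed hG hnsf h4 hfG hgG hbf hbg hi0 hj0 hf2 (fun x => by have := hg2 x; omega)
  · push_neg at hf2
    by_cases hg2 : ∃ x, 2 ≤ g x
    · exact path_symm
        (bad_mixed hG hnsf h4 hgG hfG hbg hbf hj0 hi0 hg2 (fun x => by have := hf2 x; omega))
    · push_neg at hg2
      exact bad_SS hG h4 hfG hgG hbf hbg hi0 hj0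
        (fun x => by have := hf2 x; omega) (fun x => by have := hg2 x; omega)
end Stmt12Aux

open Stmt12Aux

/-- A set `G` of cubic monomials containing all non-square-free cubics, such
that for every four distinct variables the number of square-free cubics of `G`
supported on them is `0` or at least `2`, satisfies the path condition. -/
theorem stmt12 (n : ℕ) (G : Set (Fin n → ℕ))
    (hG : ∀ v ∈ G, mdeg v = 3)
    (hnsf : ∀ v : Fin n → ℕ, mdeg v = 3 → (∃ i, 2 ≤ v i) → v ∈ G)
    (h4 : ∀ K : Finset (Fin n), K.card = 4 →
      {v ∈ G | (∀ i, v i ≤ 1) ∧ ∀ i, v i ≠ 0 → i ∈ K}.ncard = 0 ∨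
        2 ≤ {v ∈ G | (∀ i, v i ≤ 1) ∧ ∀ i, v i ≠ 0 → i ∈ K}.ncard) :
    PathCond G 3 := by
  have main : ∀ d (f : Fin n → ℕ), f ∈ G → ∀ g ∈ G, mdeg (f ⊔ g) ≤ d →
      pathBetween G 3 f g := by
    intro d
    induction d with
    | zero =>
      intro f hf g hg hle
      have h1 := mdeg_mono (le_sup_left : f ≤ f ⊔ g)
      have h3 := hG f hf
      omega
    | succ d ih =>
      intro f hf g hg hle
      by_cases hne : f = g
      · subst hne; exact path_refl hf
      by_cases hmv1 : ∃ i j, g i < f i ∧ f j < g j ∧ mv f i j ∈ G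
      · obtain ⟨i, j, hi, hj, hm⟩ := hmv1
        have hij : i ≠ j := by intro e; rw [e] at hi; omega
        refine path_trans (mv_le_sup hi hj) (path_step hf hm ?_) (ih _ hm _ hg ?_)
        · rw [mdeg_sup_mv_left hij (by omega)]
          have := hG f hf
          omega
        · have := mdeg_sup_mv_right hi hj
          omega
      by_cases hmv2 : ∃ i j, f i < g i ∧ g j < f j ∧ mv g i j ∈ G
      · obtain ⟨i, j, hi, hj, hm⟩ := hmv2
        have hij : i ≠ j := by intro e; rw [e] at hi; omega
        refine path_symm
          (path_trans (mv_le_sup hi hj) (path_step hg hm ?_) (ih _ hm _ hf ?_))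
        · rw [mdeg_sup_mv_left hij (by omega)]
          have := hG g hg
          omega
        · have h5 := mdeg_sup_mv_right hi hj
          have h6 : mdeg (g ⊔ f) = mdeg (f ⊔ g) := by rw [sup_comm]
          omega
      · push_neg at hmv1 hmv2
        exact bad_case hG hnsf h4 hf hg hne
          (fun i j hi hj => hmv1 i j hi hj) (fun i j hi hj => hmv2 i j hi hj)
  intro f hf g hg
  exact main (mdeg (f ⊔ g)) f hf g hg le_rfl
end
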